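/- (Case (b) of Proposition 2.) Let p₁, p₂ > 0 with p₁ + p₂ = 1, let q₁, q₂ ≥ 0 with q₁ + q₂ = 1, and let x₁, x₂, y₁, y₂ ∈ [0,1] with x₁ ≥ y₁ > x₂ ≥ y₂. Then there exist r₁, r₂ ∈ [0,1] with q₁ = p₁·r₁ + p₂·r₂, x₁ ≥ r₁·y₁ + (1−r₁)·y₂, and x₂ ≥ r₂·y₁ + (1−r₂)·y₂ if and only if p₁·y₁ + p₂·x₂ ≥ q₁·y₁ + q₂·y₂. -/

import Mathlib

/-- Case (b) of Proposition 2: if `x₁ ≥ y₁ > x₂ ≥ y₂`, then conditional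
probabilities `r₁, r₂` witnessing locality of the transformation (via the
Jonathan–Plenio theorem) exist if and only if
`p₁·y₁ + p₂·x₂ ≥ q₁·y₁ + q₂·y₂`. -/
theorem proposition2_case_b (p₁ p₂ q₁ q₂ : ℝ)
    (hp₁ : 0 < p₁) (hp₂ : 0 < p₂) (hq₁ : 0 ≤ q₁) (hq₂ : 0 ≤ q₂)
    (hp : p₁ + p₂ = 1) (hq : q₁ + q₂ = 1)
    (x₁ x₂ y₁ y₂ : ℝ)
    (hx₁ : x₁ ∈ Set.Icc (0:ℝ) 1) (hx₂ : x₂ ∈ Set.Icc (0:ℝ) 1)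
    (hy₁ : y₁ ∈ Set.Icc (0:ℝ) 1) (hy₂ : y₂ ∈ Set.Icc (0:ℝ) 1)
    (h12 : x₁ ≥ y₁) (h23 : y₁ > x₂) (h34 : x₂ ≥ y₂) :
    (∃ r₁ ∈ Set.Icc (0:ℝ) 1, ∃ r₂ ∈ Set.Icc (0:ℝ) 1,
      q₁ = p₁ * r₁ + p₂ * r₂ ∧
      x₁ ≥ r₁ * y₁ + (1 - r₁) * y₂ ∧
      x₂ ≥ r₂ * y₁ + (1 - r₂) * y₂) ↔
    p₁ * y₁ + p₂ * x₂ ≥ q₁ * y₁ + q₂ * y₂ := by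
  obtain ⟨hy₁0, hy₁1⟩ := hy₁
  obtain ⟨hy₂0, hy₂1⟩ := hy₂
  constructor
  · rintro ⟨r₁, ⟨hr₁0, hr₁1⟩, r₂, ⟨hr₂0, hr₂1⟩, hsum, h1, h2⟩
    nlinarith [mul_nonneg hp₁.le (sub_nonneg.2 hr₁1),
      mul_nonneg hp₂.le (sub_nonneg.2 hr₂1),
      mul_le_mul_of_nonneg_left (show r₂ * y₁ + (1 - r₂) * y₂ ≤ x₂ from h2) hp₂.le]
  · intro h
    by_cases hc : q₁ ≤ p₁
    · refine ⟨q₁ / p₁, ⟨div_nonneg hq₁ hp₁.le, (div_le_one hp₁).2 hc⟩, 0, ⟨le_refl _, zero_le_one⟩, ?_, ?_, ?_⟩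
      · field_simp
        ring
      · have h0 : 0 ≤ q₁ / p₁ := div_nonneg hq₁ hp₁.le
        have h1 : q₁ / p₁ ≤ 1 := (div_le_one hp₁).2 hc
        nlinarith
      · nlinarith
    · push_neg at hc
      have hr₂ : (q₁ - p₁) / p₂ * p₂ = q₁ - p₁ := by field_simp
      refine ⟨1, ⟨zero_le_one, le_refl _⟩, (q₁ - p₁) / p₂,
        ⟨div_nonneg (by linarith) hp₂.le, (div_le_one hp₂).2 (by linarith)⟩, ?_, by nlinarith, ?_⟩
      · field_simp
        ring
      · have h0 : 0 ≤ (q₁ - p₁) / p₂ := div_nonneg (by linarith) hp₂.le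
        nlinarith
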